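/- Let K be a field, σ an automorphism of K, and f(t) = t^m − Σ_{i=0}^{m−1} a_i t^i ∈ K[t;σ] monic of degree m ≥ 2, not right invariant. For k ∈ {1, …, m−1}, if a_i ∈ Fix(σ^k) for all i, then f t^k = t^k f in K[t;σ]; in particular f t^k ∈ K[t;σ]f, so t^k lies in the right nucleus of S_f, and t^m t^k = t^k t^m in S_f. -/

import Mathlib

open Polynomial

/-- Skew (twisted) multiplication on polynomials over `K`, representing the
multiplication of the twisted polynomial ring `K[t;σ]` with `t·a = σ(a)·t`:
`(a t^i)·(b t^j) = a σ^i(b) t^{i+j}`. -/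
noncomputable def sMul {K : Type} [Field K] (σ : K ≃+* K) (p q : K[X]) : K[X] :=
  p.sum fun i a => C a * (q.map ((σ ^ i : K ≃+* K) : K →+* K)) * X ^ i

/-- `f` is right invariant in `K[t;σ]`: `f·g ∈ R·f` for all `g`. -/
def RightInvariant {K : Type} [Field K] (σ : K ≃+* K) (f : K[X]) : Prop :=
  ∀ g : K[X], ∃ q : K[X], sMul σ f g = sMul σ q f

/-- Membership in the eigenring of `f`, i.e. the right nucleus of the Petit
algebra `S_f = K[t;σ]/K[t;σ]f` (for `f` not right invariant):
`{g | deg g < deg f ∧ f·g ∈ R·f}`. -/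
def InEigenring {K : Type} [Field K] (σ : K ≃+* K) (f g : K[X]) : Prop :=
  g.degree < f.degree ∧ ∃ q : K[X], sMul σ f g = sMul σ q f

/-- Remainder of right division by `f` in `K[t;σ]` (Petit multiplication in
`S_f` is `g ∘ h = (g·h) mod_r f`). -/
noncomputable def modRight {K : Type} [Field K] (σ : K ≃+* K) (f g : K[X]) : K[X] := by
  classical
  exact if h : ∃ r : K[X], r.degree < f.degree ∧ ∃ q : K[X], g = sMul σ q f + r
    then h.choose else 0

/-- Theorem 3.2: let `f(t) = t^m - Σ_{i<m} a_i t^i ∈ K[t;σ]` be monic of degree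
`m ≥ 2`, not right invariant, and let `1 ≤ k ≤ m-1`. If `a_i ∈ Fix(σ^k)` for all
`i`, then `f·t^k = t^k·f` in `K[t;σ]`; in particular `f·t^k ∈ K[t;σ]·f`, so `t^k`
lies in the right nucleus of `S_f`, and `t^m·t^k = t^k·t^m` in `S_f`. -/

lemma sMul_X_pow_right {K : Type} [Field K] (σ : K ≃+* K) (p : K[X]) (k : ℕ) :
    sMul σ p (X ^ k) = p * X ^ k := by
  unfold sMul
  simp only [Polynomial.map_pow, Polynomial.map_X]
  rw [Polynomial.sum]
  conv_rhs => rw [← Polynomial.sum_C_mul_X_pow_eq p, Polynomial.sum, Finset.sum_mul]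
  apply Finset.sum_congr rfl
  intro i _
  ring

lemma sMul_X_pow_left {K : Type} [Field K] (σ : K ≃+* K) (q : K[X]) (k : ℕ) :
    sMul σ (X ^ k) q = q.map ((σ ^ k : K ≃+* K) : K →+* K) * X ^ k := by
  unfold sMul
  rw [Polynomial.sum, Polynomial.support_X_pow k, Finset.sum_singleton]
  simp

theorem pow_mem_rightNucleus {K : Type} [Field K] (σ : K ≃+* K) (m : ℕ) (hm : 2 ≤ m)
    (a : ℕ → K) (f : K[X]) (hf : f = X ^ m - ∑ i ∈ Finset.range m, C (a i) * X ^ i)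
    (hri : ¬ RightInvariant σ f) (k : ℕ) (hk : 1 ≤ k) (hk' : k ≤ m - 1)
    (hfix : ∀ i < m, (σ ^ k) (a i) = a i) :
    sMul σ f (X ^ k) = sMul σ (X ^ k) f ∧
      (∃ q : K[X], sMul σ f (X ^ k) = sMul σ q f) ∧
      InEigenring σ f (X ^ k) ∧
      modRight σ f (sMul σ (X ^ m) (X ^ k)) =
        modRight σ f (sMul σ (X ^ k) (X ^ m)) := by
  have hdegsum : (∑ i ∈ Finset.range m, C (a i) * X ^ i : K[X]).degree < (m : WithBot ℕ) := by
    apply lt_of_le_of_lt (Polynomial.degree_sum_le _ _)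
    rw [Finset.sup_lt_iff (by exact_mod_cast WithBot.bot_lt_coe m)]
    intro i hi
    exact lt_of_le_of_lt (Polynomial.degree_C_mul_X_pow_le _ _)
      (by exact_mod_cast Finset.mem_range.mp hi)
  have hdeg : f.degree = (m : WithBot ℕ) := by
    rw [hf, Polynomial.degree_sub_eq_left_of_degree_lt]
    · exact Polynomial.degree_X_pow m
    · rwa [Polynomial.degree_X_pow]
  have hmap : f.map ((σ ^ k : K ≃+* K) : K →+* K) = f := by
    rw [hf]
    rw [Polynomial.map_sub, Polynomial.map_pow, Polynomial.map_X, Polynomial.map_sum]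
    congr 1
    apply Finset.sum_congr rfl
    intro i hi
    rw [Polynomial.map_mul, Polynomial.map_pow, Polynomial.map_X, Polynomial.map_C]
    erw [hfix i (Finset.mem_range.mp hi)]
  have h1 : sMul σ f (X ^ k) = sMul σ (X ^ k) f := by
    rw [sMul_X_pow_right, sMul_X_pow_left, hmap]
  refine ⟨h1, ⟨X ^ k, h1⟩, ⟨?_, ⟨X ^ k, h1⟩⟩, ?_⟩
  · rw [hdeg, Polynomial.degree_X_pow]
    exact_mod_cast lt_of_le_of_lt hk' (Nat.sub_lt (by omega) one_pos)
  · congr 1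
    rw [sMul_X_pow_right, sMul_X_pow_left]
    simp [← pow_add, Nat.add_comm]
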